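/- arXiv:1405.1102 — 3 statements merged into one kernel-verified Lean document; each statement's English description precedes it below -/
import Mathlib

section
/- Let x♮ ∈ ℝ^d, let Φ be an m × d matrix, and let y = Φ x♮ + e with ‖e‖₂ ≤ η. Let x̂ be any minimizer of f(x) subject to ‖Φx − y‖₂ ≤ η. Then ‖x̂ − x♮‖₂ ≤ 2η / λmin(Φ; D(f, x♮)), where λmin(Φ; K) := inf{‖Φu‖₂ : u ∈ K, ‖u‖₂ = 1} and D(f, x♮) is the descent cone of f at x♮. -/
open scoped Pointwise

/-- The descent cone of `f` at `x`. -/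
def descentCone {d : ℕ} (f : EuclideanSpace ℝ (Fin d) → EReal)
    (x : EuclideanSpace ℝ (Fin d)) : Set (EuclideanSpace ℝ (Fin d)) :=
  ⋃ τ ∈ Set.Ioi (0 : ℝ), {u | f (x + τ • u) ≤ f x}

/-- The minimum conic singular value of a linear map `Φ` with respect to a cone `K`. -/
noncomputable def minConicSingularValue {d m : ℕ}
    (Φ : EuclideanSpace ℝ (Fin d) →ₗ[ℝ] EuclideanSpace ℝ (Fin m))
    (K : Set (EuclideanSpace ℝ (Fin d))) : ℝ :=
  sInf {r : ℝ | ∃ u ∈ K, ‖u‖ = 1 ∧ r = ‖Φ u‖}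

/-- Deterministic error bound for convex recovery.  When
`λmin(Φ; D(f,x♮)) = 0` the bound `‖x̂ − x♮‖ ≤ 2η/λmin` is interpreted as `+∞`,
so we state it in the equivalent product form. -/
theorem deterministic_error_bound {d m : ℕ}
    (f : EuclideanSpace ℝ (Fin d) → EReal)
    (hconv : ∀ u v : EuclideanSpace ℝ (Fin d), ∀ a b : ℝ, 0 ≤ a → 0 ≤ b → a + b = 1 →
      f (a • u + b • v) ≤ (a : EReal) * f u + (b : EReal) * f v)
    (hproper_top : ∃ z, f z ≠ ⊤) (hproper_bot : ∀ z, f z ≠ ⊥)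
    (xnat : EuclideanSpace ℝ (Fin d))
    (Φ : EuclideanSpace ℝ (Fin d) →ₗ[ℝ] EuclideanSpace ℝ (Fin m))
    (e : EuclideanSpace ℝ (Fin m)) (η : ℝ) (he : ‖e‖ ≤ η)
    (y : EuclideanSpace ℝ (Fin m)) (hy : y = Φ xnat + e)
    (xhat : EuclideanSpace ℝ (Fin d))
    (hfeas : ‖Φ xhat - y‖ ≤ η)
    (hopt : ∀ z : EuclideanSpace ℝ (Fin d), ‖Φ z - y‖ ≤ η → f xhat ≤ f z) :
    minConicSingularValue Φ (descentCone f xnat) * ‖xhat - xnat‖ ≤ 2 * η := by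
  have hη : 0 ≤ η := le_trans (norm_nonneg e) he
  set u := xhat - xnat with hu
  by_cases hu0 : u = 0
  · rw [hu0, norm_zero, mul_zero]; linarith
  · have hnu : 0 < ‖u‖ := norm_pos_iff.mpr hu0
    -- xnat is feasible
    have hxnat_feas : ‖Φ xnat - y‖ ≤ η := by
      rw [hy]; simpa using he
    have hdesc : f xhat ≤ f xnat := hopt xnat hxnat_feas
    -- unit vector in the descent cone
    have hmem : (‖u‖⁻¹ • u) ∈ descentCone f xnat := by
      refine Set.mem_biUnion (Set.mem_Ioi.mpr hnu) ?_
      show f (xnat + ‖u‖ • (‖u‖⁻¹ • u)) ≤ f xnat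
      rw [smul_smul, mul_inv_cancel₀ (ne_of_gt hnu), one_smul]
      have : xnat + u = xhat := by rw [hu]; abel
      rw [this]; exact hdesc
    -- ‖Φ u‖ ≤ 2η
    have hΦu : ‖Φ u‖ ≤ 2 * η := by
      have : Φ u = (Φ xhat - y) - (Φ xnat - y) := by
        rw [hu, map_sub]; abel
      rw [this]
      calc ‖(Φ xhat - y) - (Φ xnat - y)‖ ≤ ‖Φ xhat - y‖ + ‖Φ xnat - y‖ := norm_sub_le _ _
        _ ≤ 2 * η := by linarith
    -- λmin ≤ ‖Φ u‖ / ‖u‖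
    have hbdd : BddBelow {r : ℝ | ∃ v ∈ descentCone f xnat, ‖v‖ = 1 ∧ r = ‖Φ v‖} := by
      refine ⟨0, fun r ⟨v, _, _, hr⟩ => ?_⟩
      rw [hr]; exact norm_nonneg _
    have hlam : minConicSingularValue Φ (descentCone f xnat) ≤ ‖Φ (‖u‖⁻¹ • u)‖ := by
      apply csInf_le hbdd
      exact ⟨‖u‖⁻¹ • u, hmem, by rw [norm_smul, norm_inv, norm_norm,
        inv_mul_cancel₀ (ne_of_gt hnu)], rfl⟩
    have hval : ‖Φ (‖u‖⁻¹ • u)‖ = ‖u‖⁻¹ * ‖Φ u‖ := by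
      rw [map_smul, norm_smul, norm_inv, norm_norm]
    rw [hval] at hlam
    calc minConicSingularValue Φ (descentCone f xnat) * ‖u‖
        ≤ (‖u‖⁻¹ * ‖Φ u‖) * ‖u‖ := by
          exact mul_le_mul_of_nonneg_right hlam (le_of_lt hnu)
      _ = ‖Φ u‖ := by field_simp
      _ ≤ 2 * η := hΦu
end

section
/- Let f be a proper convex function on ℝ^d and x a point where the subdifferential ∂f(x) is nonempty and does not contain 0. Then w(D(f,x))² ≤ E inf_{τ ≥ 0} dist²(g, τ·∂f(x)), where g ∼ N(0, I_d), D(f,x) is the descent cone, and w is the conic Gaussian width. -/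
open MeasureTheory ProbabilityTheory
open scoped RealInnerProductSpace Pointwise

/-- The standard Gaussian measure on `ℝ^d`. -/
noncomputable def stdGaussian (d : ℕ) : Measure (EuclideanSpace ℝ (Fin d)) :=
  (Measure.pi fun _ : Fin d => gaussianReal 0 1).map
    (EuclideanSpace.equiv (Fin d) ℝ).symm

/-- The conic Gaussian width of a cone `K ⊂ ℝ^d`. -/
noncomputable def conicGaussianWidth {d : ℕ} (K : Set (EuclideanSpace ℝ (Fin d))) : ℝ :=
  ∫ g, sSup {r : ℝ | ∃ u ∈ K, ‖u‖ = 1 ∧ r = ⟪u, g⟫} ∂(stdGaussian d)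

/-- The subdifferential of `f` at `x`. -/
def subdiff {d : ℕ} (f : EuclideanSpace ℝ (Fin d) → EReal)
    (x : EuclideanSpace ℝ (Fin d)) : Set (EuclideanSpace ℝ (Fin d)) :=
  {v | ∀ y, f x + ((⟪y - x, v⟫ : ℝ) : EReal) ≤ f y}


section WidthAux
open Metric
variable {d : ℕ}

noncomputable def wfun (K : Set (EuclideanSpace ℝ (Fin d)))
    (g : EuclideanSpace ℝ (Fin d)) : ℝ :=
  sSup {r : ℝ | ∃ u ∈ K, ‖u‖ = 1 ∧ r = ⟪u, g⟫}

lemma wfun_bddAbove (K : Set (EuclideanSpace ℝ (Fin d))) (g : EuclideanSpace ℝ (Fin d)) :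
    ∀ r ∈ {r : ℝ | ∃ u ∈ K, ‖u‖ = 1 ∧ r = ⟪u, g⟫}, r ≤ ‖g‖ := by
  rintro r ⟨u, hu, hn, rfl⟩
  calc ⟪u, g⟫ ≤ ‖u‖ * ‖g‖ := real_inner_le_norm u g
  _ = ‖g‖ := by rw [hn, one_mul]

lemma key_inner_nonpos (f : EuclideanSpace ℝ (Fin d) → EReal)
    (hproper_top : ∃ z, f z ≠ ⊤) (hproper_bot : ∀ z, f z ≠ ⊥)
    (x : EuclideanSpace ℝ (Fin d)) {u v : EuclideanSpace ℝ (Fin d)}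
    (hu : u ∈ descentCone f x) (hv : v ∈ subdiff f x) : ⟪u, v⟫ ≤ 0 := by
  -- f x is finite
  obtain ⟨r, hr⟩ : ∃ r : ℝ, f x = (r : EReal) := by
    have hxt : f x ≠ ⊤ := by
      intro htop
      obtain ⟨z, hz⟩ := hproper_top
      refine hz (top_le_iff.mp ?_)
      have := hv z
      rwa [htop, EReal.top_add_of_ne_bot (by exact_mod_cast EReal.coe_ne_bot _)] at this
    lift f x to ℝ using ⟨hxt, hproper_bot x⟩ with r
    exact ⟨r, rfl⟩
  obtain ⟨t, ht, hfu⟩ : ∃ t : ℝ, 0 < t ∧ f (x + t • u) ≤ f x := by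
    simp only [descentCone, Set.mem_iUnion, Set.mem_Ioi] at hu
    obtain ⟨t, ht, h⟩ := hu
    exact ⟨t, ht, h⟩
  have h1 := (hv (x + t • u)).trans hfu
  rw [hr] at h1
  have h2 : ⟪x + t • u - x, v⟫ = t * ⟪u, v⟫ := by
    rw [add_sub_cancel_left, real_inner_smul_left]
  rw [h2, ← EReal.coe_add, EReal.coe_le_coe_iff] at h1
  nlinarith

lemma wfun_le_infDist (f : EuclideanSpace ℝ (Fin d) → EReal)
    (hproper_top : ∃ z, f z ≠ ⊤) (hproper_bot : ∀ z, f z ≠ ⊥)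
    (x : EuclideanSpace ℝ (Fin d)) (hne : (subdiff f x).Nonempty)
    (g : EuclideanSpace ℝ (Fin d)) {τ : ℝ} (hτ : 0 ≤ τ) :
    wfun (descentCone f x) g ≤ infDist g (τ • subdiff f x) := by
  rcases Set.eq_empty_or_nonempty
      {r : ℝ | ∃ u ∈ descentCone f x, ‖u‖ = 1 ∧ r = ⟪u, g⟫} with hT | hT
  · rw [wfun, hT, Real.sSup_empty]
    exact infDist_nonneg
  · refine Real.sSup_le ?_ ?_
    · rintro r ⟨u, hu, hn, rfl⟩
      haveI := hne.smul_set (a := τ) |>.to_subtype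
      rw [infDist_eq_iInf]
      refine le_ciInf fun y => ?_
      obtain ⟨y, hy⟩ := y
      obtain ⟨v, hv, rfl⟩ := hy
      have hkey : ⟪u, v⟫ ≤ 0 := key_inner_nonpos f hproper_top hproper_bot x hu hv
      have h1 : ⟪u, g⟫ = ⟪u, g - τ • v⟫ + τ * ⟪u, v⟫ := by
        rw [inner_sub_right, real_inner_smul_right]; ring
      have h2 : ⟪u, g - τ • v⟫ ≤ ‖g - τ • v‖ := by
        calc ⟪u, g - τ • v⟫ ≤ ‖u‖ * ‖g - τ • v‖ := real_inner_le_norm _ _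
        _ = ‖g - τ • v‖ := by rw [hn, one_mul]
      have h3 : τ * ⟪u, v⟫ ≤ 0 := mul_nonpos_of_nonneg_of_nonpos hτ hkey
      rw [dist_eq_norm]
      simp only
      linarith
    · exact infDist_nonneg

lemma lipschitz_wfun (K : Set (EuclideanSpace ℝ (Fin d))) :
    LipschitzWith 1 (wfun K) := by
  rcases em (∃ u ∈ K, ‖u‖ = 1) with h | h
  · refine LipschitzWith.of_le_add fun g g' => ?_
    obtain ⟨u0, hu0, hn0⟩ := h
    refine csSup_le ⟨⟪u0, g⟫, ⟨u0, hu0, hn0, rfl⟩⟩ ?_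
    rintro r ⟨u, hu, hn, rfl⟩
    have h1 : ⟪u, g'⟫ ≤ wfun K g' := le_csSup ⟨‖g'‖, wfun_bddAbove K g'⟩ ⟨u, hu, hn, rfl⟩
    have h2 : ⟪u, g⟫ = ⟪u, g'⟫ + ⟪u, g - g'⟫ := by rw [inner_sub_right]; ring
    have h3 : ⟪u, g - g'⟫ ≤ ‖g - g'‖ := by
      calc ⟪u, g - g'⟫ ≤ ‖u‖ * ‖g - g'‖ := real_inner_le_norm _ _
      _ = ‖g - g'‖ := by rw [hn, one_mul]
    rw [dist_eq_norm]
    linarith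
  · have hempty : ∀ g : EuclideanSpace ℝ (Fin d),
        {r : ℝ | ∃ u ∈ K, ‖u‖ = 1 ∧ r = ⟪u, g⟫} = ∅ := by
      intro g
      rw [Set.eq_empty_iff_forall_notMem]
      rintro r ⟨u, hu, hn, rfl⟩
      exact h ⟨u, hu, hn⟩
    have : wfun K = fun _ => (0:ℝ) := by
      funext g; rw [wfun, hempty, Real.sSup_empty]
    rw [this]
    exact LipschitzWith.const' 0

lemma abs_wfun_le (K : Set (EuclideanSpace ℝ (Fin d))) (g : EuclideanSpace ℝ (Fin d)) :
    |wfun K g| ≤ ‖g‖ := by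
  rcases Set.eq_empty_or_nonempty {r : ℝ | ∃ u ∈ K, ‖u‖ = 1 ∧ r = ⟪u, g⟫} with hT | hT
  · rw [wfun, hT, Real.sSup_empty]; simp
  · rw [abs_le]
    constructor
    · obtain ⟨r0, u0, hu0, hn0, rfl⟩ := hT
      refine le_trans ?_ (le_csSup ⟨‖g‖, wfun_bddAbove K g⟩ ⟨u0, hu0, hn0, rfl⟩)
      calc -‖g‖ ≤ -(‖u0‖ * ‖g‖) := by rw [hn0, one_mul]
      _ ≤ ⟪u0, g⟫ := neg_le_of_neg_le (by simpa using real_inner_le_norm u0 (-g))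
    · exact Real.sSup_le (wfun_bddAbove K g) (norm_nonneg g)

lemma wfun_add_wfun_neg_nonneg (K : Set (EuclideanSpace ℝ (Fin d)))
    (g : EuclideanSpace ℝ (Fin d)) : 0 ≤ wfun K g + wfun K (-g) := by
  rcases em (∃ u ∈ K, ‖u‖ = 1) with h | h
  · obtain ⟨u0, hu0, hn0⟩ := h
    have h1 : ⟪u0, g⟫ ≤ wfun K g := le_csSup ⟨‖g‖, wfun_bddAbove K g⟩ ⟨u0, hu0, hn0, rfl⟩
    have h2 : ⟪u0, -g⟫ ≤ wfun K (-g) :=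
      le_csSup ⟨‖-g‖, wfun_bddAbove K (-g)⟩ ⟨u0, hu0, hn0, rfl⟩
    have h3 : ⟪u0, -g⟫ = -⟪u0, g⟫ := by rw [inner_neg_right]
    linarith
  · have hempty : ∀ g' : EuclideanSpace ℝ (Fin d),
        {r : ℝ | ∃ u ∈ K, ‖u‖ = 1 ∧ r = ⟪u, g'⟫} = ∅ := by
      intro g'
      rw [Set.eq_empty_iff_forall_notMem]
      rintro r ⟨u, hu, hn, rfl⟩
      exact h ⟨u, hu, hn⟩
    rw [wfun, wfun, hempty, hempty, Real.sSup_empty]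
    norm_num

noncomputable def hfun (S : Set (EuclideanSpace ℝ (Fin d)))
    (g : EuclideanSpace ℝ (Fin d)) : ℝ :=
  ⨅ τ : Set.Ici (0 : ℝ), infDist g ((τ : ℝ) • S)

lemma hfun_bddBelow (S : Set (EuclideanSpace ℝ (Fin d))) (g : EuclideanSpace ℝ (Fin d)) :
    BddBelow (Set.range fun τ : Set.Ici (0 : ℝ) => infDist g ((τ : ℝ) • S)) := by
  refine ⟨0, ?_⟩
  rintro r ⟨τ, rfl⟩
  exact infDist_nonneg

lemma hfun_nonneg (S : Set (EuclideanSpace ℝ (Fin d))) (g : EuclideanSpace ℝ (Fin d)) :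
    0 ≤ hfun S g :=
  le_ciInf fun τ => infDist_nonneg

lemma hfun_le_norm (S : Set (EuclideanSpace ℝ (Fin d))) (hS : S.Nonempty)
    (g : EuclideanSpace ℝ (Fin d)) : hfun S g ≤ ‖g‖ := by
  refine ciInf_le_of_le (hfun_bddBelow S g) ⟨0, Set.self_mem_Ici⟩ ?_
  rw [Set.zero_smul_set hS]
  show infDist g {0} ≤ ‖g‖
  rw [infDist_singleton, dist_zero_right]

lemma lipschitz_hfun (S : Set (EuclideanSpace ℝ (Fin d))) :
    LipschitzWith 1 (hfun S) := by
  refine LipschitzWith.of_le_add fun g g' => ?_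
  rw [← sub_le_iff_le_add]
  refine le_ciInf fun τ => ?_
  rw [sub_le_iff_le_add]
  calc hfun S g ≤ infDist g ((τ : ℝ) • S) := ciInf_le (hfun_bddBelow S g) τ
  _ ≤ infDist g' ((τ : ℝ) • S) + dist g g' := infDist_le_infDist_add_dist

lemma hfun_sq (S : Set (EuclideanSpace ℝ (Fin d))) (g : EuclideanSpace ℝ (Fin d)) :
    hfun S g ^ 2 = ⨅ τ : Set.Ici (0 : ℝ), (infDist g ((τ : ℝ) • S)) ^ 2 := by
  have hφ : Monotone (fun t : ℝ => (max t 0) ^ 2) := by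
    intro a b hab
    exact pow_le_pow_left₀ (le_max_right a 0) (max_le_max hab le_rfl) 2
  have hc : ContinuousAt (fun t : ℝ => (max t 0) ^ 2) (hfun S g) :=
    ((continuous_id.max continuous_const).pow 2).continuousAt
  have key := hφ.map_ciInf_of_continuousAt hc (hfun_bddBelow S g)
  have h1 : (max (hfun S g) 0) ^ 2 = hfun S g ^ 2 := by
    rw [max_eq_left (hfun_nonneg S g)]
  rw [← h1, hfun] at *
  rw [key]
  exact iInf_congr fun τ => by rw [max_eq_left infDist_nonneg]

open Metric Real in
private lemma integrable_sq_gaussian' : Integrable (fun x : ℝ => x^2) (gaussianReal 0 1) := by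
  rw [gaussianReal_of_var_ne_zero 0 one_ne_zero,
    integrable_withDensity_iff (measurable_gaussianPDF _ _)
      (Filter.Eventually.of_forall fun x => ENNReal.ofReal_lt_top)]
  have h := (integrable_rpow_mul_exp_neg_mul_sq (b := 1/2) (by norm_num)
      (s := 2) (by norm_num)).const_mul ((Real.sqrt (2 * Real.pi))⁻¹)
  refine h.congr (Filter.Eventually.of_forall fun x => ?_)
  show _ = x ^ (2:ℕ) * (ENNReal.ofReal (gaussianPDFReal 0 1 x)).toReal
  rw [ENNReal.toReal_ofReal (gaussianPDFReal_nonneg 0 1 x), gaussianPDFReal]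
  have h2 : x ^ (2:ℝ) = x ^ (2:ℕ) := by
    rw [← Real.rpow_natCast x 2]; norm_num
  push_cast
  rw [h2]
  ring_nf

private lemma integrable_eval_sq' (d : ℕ) (i : Fin d) :
    Integrable (fun y : Fin d → ℝ => (y i)^2) (Measure.pi fun _ => gaussianReal 0 1) := by
  letI : MeasureSpace ℝ := ⟨gaussianReal 0 1⟩
  haveI : IsProbabilityMeasure (volume : Measure ℝ) :=
    inferInstanceAs (IsProbabilityMeasure (gaussianReal 0 1))
  have h : Integrable (fun y : Fin d → ℝ =>
      ∏ j, (fun j x => if j = i then x^2 else 1 : Fin d → ℝ → ℝ) j (y j)) := by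
    refine Integrable.fintype_prod (𝕜 := ℝ) (f := fun j x => if j = i then x^2 else 1)
      fun j => ?_
    by_cases hj : j = i
    · simp only [hj, ↓reduceIte]; exact integrable_sq_gaussian'
    · simpa [hj] using (integrable_const (1:ℝ) : Integrable (fun _ : ℝ => (1:ℝ)) volume)
  have heq : (fun y : Fin d → ℝ =>
      ∏ j, (fun j x => if j = i then x^2 else 1 : Fin d → ℝ → ℝ) j (y j))
      = fun y => (y i)^2 := by
    funext y
    simp
  rw [heq] at h
  exact h

instance (d : ℕ) : IsProbabilityMeasure (stdGaussian d) :=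
  Measure.isProbabilityMeasure_map
    ((EuclideanSpace.equiv (Fin d) ℝ).symm.continuous.measurable.aemeasurable)

private lemma integrable_norm_sq_stdGaussian (d : ℕ) :
    Integrable (fun g : EuclideanSpace ℝ (Fin d) => ‖g‖^2) (stdGaussian d) := by
  rw [_root_.stdGaussian, integrable_map_measure (g := fun g : EuclideanSpace ℝ (Fin d) => ‖g‖^2)
    ((continuous_norm.pow 2).aestronglyMeasurable)
    ((EuclideanSpace.equiv (Fin d) ℝ).symm.continuous.measurable.aemeasurable)]
  have heq : ((fun g : EuclideanSpace ℝ (Fin d) => ‖g‖^2) ∘ (EuclideanSpace.equiv (Fin d) ℝ).symm)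
      = fun y : Fin d → ℝ => ∑ i, (y i)^2 := by
    funext y
    simp only [Function.comp_apply, EuclideanSpace.norm_eq]
    rw [Real.sq_sqrt (by positivity)]
    simp [Real.norm_eq_abs, sq_abs]
  rw [heq]
  exact integrable_finset_sum _ fun i _ => integrable_eval_sq' d i

private lemma gaussian_neg' :
    MeasurePreserving (fun x : ℝ => -x) (gaussianReal 0 1) (gaussianReal 0 1) := by
  refine ⟨measurable_neg, ?_⟩
  have h := gaussianReal_map_const_mul (μ := 0) (v := 1) (-1)
  have h2 : (fun x : ℝ => -1 * x) = fun x : ℝ => -x := by funext x; ring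
  rw [h2] at h
  rw [h]
  norm_num

private lemma stdGaussian_neg (d : ℕ) :
    MeasurePreserving (fun g : EuclideanSpace ℝ (Fin d) => -g)
      (stdGaussian d) (stdGaussian d) := by
  have hpi : MeasurePreserving (fun (y : Fin d → ℝ) i => -(y i))
      (Measure.pi fun _ => gaussianReal 0 1) (Measure.pi fun _ => gaussianReal 0 1) :=
    measurePreserving_pi _ _ fun _ => gaussian_neg'
  refine ⟨measurable_neg, ?_⟩
  have he : Measurable ((EuclideanSpace.equiv (Fin d) ℝ).symm : (Fin d → ℝ) → _) :=
    (EuclideanSpace.equiv (Fin d) ℝ).symm.continuous.measurable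
  rw [_root_.stdGaussian, Measure.map_map measurable_neg he]
  have heq : ((fun g : EuclideanSpace ℝ (Fin d) => -g) ∘ (EuclideanSpace.equiv (Fin d) ℝ).symm)
      = ((EuclideanSpace.equiv (Fin d) ℝ).symm : (Fin d → ℝ) → _)
        ∘ (fun (y : Fin d → ℝ) i => -(y i)) := by
    funext y
    rfl
  rw [heq, ← Measure.map_map he (measurable_pi_lambda (fun (y : Fin d → ℝ) i => -(y i)) fun i => (measurable_pi_apply i).neg),
    hpi.map_eq]


end WidthAux

/-- The width of a descent cone is controlled by the expected squared distance
to the scaled subdifferential. -/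
theorem width_of_descentCone {d : ℕ} (f : EuclideanSpace ℝ (Fin d) → EReal)
    (hconv : ∀ u v : EuclideanSpace ℝ (Fin d), ∀ a b : ℝ, 0 ≤ a → 0 ≤ b → a + b = 1 →
      f (a • u + b • v) ≤ (a : EReal) * f u + (b : EReal) * f v)
    (hproper_top : ∃ z, f z ≠ ⊤) (hproper_bot : ∀ z, f z ≠ ⊥)
    (x : EuclideanSpace ℝ (Fin d))
    (hne : (subdiff f x).Nonempty) (h0 : (0 : EuclideanSpace ℝ (Fin d)) ∉ subdiff f x) :
    conicGaussianWidth (descentCone f x) ^ 2 ≤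
      ∫ g, (⨅ τ : Set.Ici (0 : ℝ),
        (Metric.infDist g ((τ : ℝ) • subdiff f x)) ^ 2) ∂(stdGaussian d) := by
  classical
  have hSne : (subdiff f x).Nonempty := hne
  have hA_meas : AEStronglyMeasurable (wfun (descentCone f x)) (stdGaussian d) :=
    (lipschitz_wfun (descentCone f x)).continuous.aestronglyMeasurable
  have hnorm2 : Integrable (fun g : EuclideanSpace ℝ (Fin d) => ‖g‖^2) (stdGaussian d) :=
    integrable_norm_sq_stdGaussian d
  have hnorm_mem2 : MemLp (fun g : EuclideanSpace ℝ (Fin d) => ‖g‖) 2 (stdGaussian d) := by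
    rw [memLp_two_iff_integrable_sq continuous_norm.aestronglyMeasurable]
    exact hnorm2
  have hnorm_int : Integrable (fun g : EuclideanSpace ℝ (Fin d) => ‖g‖) (stdGaussian d) :=
    hnorm_mem2.integrable one_le_two
  have hA_int : Integrable (wfun (descentCone f x)) (stdGaussian d) :=
    hnorm_int.mono' hA_meas (Filter.Eventually.of_forall fun g => by
      simpa [Real.norm_eq_abs, abs_of_nonneg (norm_nonneg g)] using
        abs_wfun_le (descentCone f x) g)
  have hh_meas : AEStronglyMeasurable (hfun (subdiff f x)) (stdGaussian d) :=
    (lipschitz_hfun (subdiff f x)).continuous.aestronglyMeasurable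
  have hh_mem2 : MemLp (hfun (subdiff f x)) 2 (stdGaussian d) := by
    refine hnorm_mem2.of_le hh_meas (Filter.Eventually.of_forall fun g => ?_)
    rw [Real.norm_eq_abs, abs_of_nonneg (hfun_nonneg _ g), Real.norm_eq_abs,
      abs_of_nonneg (norm_nonneg g)]
    exact hfun_le_norm _ hSne g
  have hh_int : Integrable (hfun (subdiff f x)) (stdGaussian d) :=
    hh_mem2.integrable one_le_two
  have hw_le : ∫ g, wfun (descentCone f x) g ∂(stdGaussian d)
      ≤ ∫ g, hfun (subdiff f x) g ∂(stdGaussian d) :=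
    integral_mono hA_int hh_int fun g =>
      le_ciInf fun τ => wfun_le_infDist f hproper_top hproper_bot x hne g τ.2
  have hmp := stdGaussian_neg d
  have hAneg_int : Integrable (fun g => wfun (descentCone f x) (-g)) (stdGaussian d) :=
    (hmp.integrable_comp_emb
      (Homeomorph.neg (EuclideanSpace ℝ (Fin d))).measurableEmbedding).mpr hA_int
  have hInegeq : ∫ g, wfun (descentCone f x) (-g) ∂(stdGaussian d)
      = ∫ g, wfun (descentCone f x) g ∂(stdGaussian d) :=
    hmp.integral_comp (Homeomorph.neg (EuclideanSpace ℝ (Fin d))).measurableEmbedding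
      (wfun (descentCone f x))
  have hw_nonneg : 0 ≤ ∫ g, wfun (descentCone f x) g ∂(stdGaussian d) := by
    have h0 : 0 ≤ ∫ g, (wfun (descentCone f x) g + wfun (descentCone f x) (-g))
        ∂(stdGaussian d) :=
      integral_nonneg fun g => wfun_add_wfun_neg_nonneg (descentCone f x) g
    rw [integral_add hA_int hAneg_int, hInegeq] at h0
    linarith
  have hvar := variance_nonneg (hfun (subdiff f x)) (stdGaussian d)
  rw [variance_eq_sub hh_mem2] at hvar
  have hjensen : (∫ g, hfun (subdiff f x) g ∂(stdGaussian d))^2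
      ≤ ∫ g, (hfun (subdiff f x) g)^2 ∂(stdGaussian d) := by
    have h1 : (stdGaussian d)[(hfun (subdiff f x)) ^ 2]
        = ∫ g, (hfun (subdiff f x) g)^2 ∂(stdGaussian d) := by
      apply integral_congr_ae
      exact Filter.Eventually.of_forall fun g => by simp [Pi.pow_apply]
    rw [h1] at hvar
    linarith
  have hwdef : conicGaussianWidth (descentCone f x)
      = ∫ g, wfun (descentCone f x) g ∂(stdGaussian d) := rfl
  calc conicGaussianWidth (descentCone f x) ^ 2
      ≤ (∫ g, hfun (subdiff f x) g ∂(stdGaussian d))^2 := by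
        rw [hwdef]
        exact pow_le_pow_left₀ hw_nonneg hw_le 2
    _ ≤ ∫ g, (hfun (subdiff f x) g)^2 ∂(stdGaussian d) := hjensen
    _ = ∫ g, (⨅ τ : Set.Ici (0 : ℝ),
          (Metric.infDist g ((τ : ℝ) • subdiff f x)) ^ 2) ∂(stdGaussian d) := by
        apply integral_congr_ae
        exact Filter.Eventually.of_forall fun g => hfun_sq (subdiff f x) g
end

section
/- Let g be a standard normal random variable and τ ≥ 0. Then E[(|g| − τ)₊²] ≤ exp(−τ²/2), where (a)₊ := max{a,0}. -/
open MeasureTheory ProbabilityTheory Set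

lemma gauss_pdf01_eq (s : ℝ) :
    gaussianPDFReal 0 1 s = (Real.sqrt (2 * Real.pi))⁻¹ * Real.exp (-(1/2) * s ^ 2) := by
  simp only [gaussianPDFReal, NNReal.coe_one, mul_one, sub_zero, one_div]
  congr 1
  ring_nf

lemma integral_gaussianReal_zero_one (f : ℝ → ℝ) :
    ∫ x, f x ∂(gaussianReal 0 1) = ∫ x, gaussianPDFReal 0 1 x * f x := by
  rw [gaussianReal_of_var_ne_zero _ one_ne_zero]
  have h : gaussianPDF 0 1 = fun x => ((Real.toNNReal (gaussianPDFReal 0 1 x)) : ENNReal) := rfl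
  rw [h, integral_withDensity_eq_integral_smul
    (Measurable.real_toNNReal (measurable_gaussianPDFReal 0 1))]
  refine integral_congr_ae (ae_of_all _ fun x => ?_)
  simp [NNReal.smul_def, Real.coe_toNNReal _ (gaussianPDFReal_nonneg 0 1 x)]

lemma integral_Ioi_sq_exp_half : ∫ s in Ioi (0:ℝ), s ^ 2 * Real.exp (-(1/2) * s ^ 2)
    = Real.sqrt (2 * Real.pi) / 2 := by
  have h := integral_rpow_mul_exp_neg_mul_rpow (p := 2) (q := 2) (b := 1/2)
    (by norm_num) (by norm_num) (by norm_num)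
  have h2 : ∀ x : ℝ, x ^ (2:ℝ) = x ^ 2 := fun x => Real.rpow_two x
  simp only [h2] at h
  rw [h]
  have hG : Real.Gamma ((2 + 1) / 2) = Real.sqrt Real.pi / 2 := by
    rw [show ((2:ℝ) + 1) / 2 = 1/2 + 1 by norm_num, Real.Gamma_add_one (by norm_num),
      Real.Gamma_one_half_eq]
    ring
  have hb : ((1:ℝ)/2) ^ (-((2:ℝ) + 1) / 2) = 2 * Real.sqrt 2 := by
    rw [show -((2:ℝ) + 1) / 2 = -(3/2) by norm_num, Real.rpow_neg (by norm_num),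
      show ((1:ℝ)/2) = 2⁻¹ by norm_num, Real.inv_rpow (by norm_num), inv_inv,
      show ((3:ℝ)/2) = 1 + 1/2 by norm_num, Real.rpow_add (by norm_num),
      Real.rpow_one, ← Real.sqrt_eq_rpow]
  rw [hG, hb, Real.sqrt_mul (by norm_num)]
  ring

lemma gauss_soft_key (τ : ℝ) (hτ : 0 ≤ τ) (t : ℝ) :
    gaussianPDFReal 0 1 t * max (t - τ) 0 ^ 2 ≤
    Real.exp (-τ ^ 2 / 2) * (max (t - τ) 0 ^ 2 * gaussianPDFReal τ 1 t) := by
  rcases le_or_gt t τ with h | h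
  · rw [max_eq_right (sub_nonpos.2 h)]
    simp
  · rw [max_eq_left (by linarith)]
    have hpdf : gaussianPDFReal 0 1 t ≤ Real.exp (-τ ^ 2 / 2) * gaussianPDFReal τ 1 t := by
      simp only [gaussianPDFReal, NNReal.coe_one, mul_one, sub_zero]
      rw [mul_comm (Real.exp (-τ ^ 2 / 2)), mul_assoc]
      refine mul_le_mul_of_nonneg_left ?_ (by positivity)
      rw [← Real.exp_add, Real.exp_le_exp]
      nlinarith
    calc gaussianPDFReal 0 1 t * (t - τ) ^ 2
        ≤ (Real.exp (-τ ^ 2 / 2) * gaussianPDFReal τ 1 t) * (t - τ) ^ 2 :=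
          mul_le_mul_of_nonneg_right hpdf (by positivity)
      _ = Real.exp (-τ ^ 2 / 2) * ((t - τ) ^ 2 * gaussianPDFReal τ 1 t) := by ring

/-- For a standard normal `g` and `τ ≥ 0`, `E[(|g| − τ)₊²] ≤ exp(−τ²/2)`. -/
theorem gaussian_soft_threshold_moment (τ : ℝ) (hτ : 0 ≤ τ) :
    ∫ x, max (|x| - τ) 0 ^ 2 ∂(gaussianReal 0 1) ≤ Real.exp (-τ ^ 2 / 2) := by
  have hπ : (0:ℝ) < Real.sqrt (2 * Real.pi) := by positivity
  set W : ℝ → ℝ := fun s => max s 0 ^ 2 * gaussianPDFReal 0 1 s with hWdef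
  set G : ℝ → ℝ := fun t => gaussianPDFReal 0 1 t * max (t - τ) 0 ^ 2 with hGdef
  -- integrability facts
  have hInt0 : Integrable (fun s : ℝ => s ^ 2 * Real.exp (-(1/2) * s ^ 2)) := by
    have h := integrable_rpow_mul_exp_neg_mul_sq (b := 1/2) (by norm_num) (s := 2) (by norm_num)
    have h2 : ∀ x : ℝ, x ^ (2:ℝ) = x ^ 2 := fun x => Real.rpow_two x
    simpa only [h2] using h
  have hWmeas : AEStronglyMeasurable W volume := by
    exact (((measurable_id.max measurable_const).pow_const 2).mul
      (measurable_gaussianPDFReal 0 1)).aestronglyMeasurable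
  have hIntW : Integrable W := by
    refine Integrable.mono' (hInt0.const_mul ((Real.sqrt (2 * Real.pi))⁻¹)) hWmeas
      (ae_of_all _ fun s => ?_)
    have h1 : max s 0 ^ 2 ≤ s ^ 2 := by
      rcases le_or_gt s 0 with h | h
      · rw [max_eq_right h]; simpa using sq_nonneg s
      · rw [max_eq_left h.le]
    simp only [hWdef]
    rw [Real.norm_eq_abs, abs_of_nonneg (mul_nonneg (by positivity)
      (gaussianPDFReal_nonneg 0 1 s)), gauss_pdf01_eq]
    calc max s 0 ^ 2 * ((Real.sqrt (2 * Real.pi))⁻¹ * Real.exp (-(1/2) * s ^ 2))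
        ≤ s ^ 2 * ((Real.sqrt (2 * Real.pi))⁻¹ * Real.exp (-(1/2) * s ^ 2)) :=
          mul_le_mul_of_nonneg_right h1 (by positivity)
      _ = (Real.sqrt (2 * Real.pi))⁻¹ * (s ^ 2 * Real.exp (-(1/2) * s ^ 2)) := by ring
  -- the value of ∫ W
  have hWval : ∫ s, W s = 1 / 2 := by
    have hzero : ∀ s ∉ Ioi (0:ℝ), W s = 0 := by
      intro s hs
      have : max s 0 = 0 := max_eq_right (by simpa using hs)
      simp [hWdef, this]
    rw [← setIntegral_eq_integral_of_forall_compl_eq_zero hzero]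
    have hcongr : ∫ s in Ioi (0:ℝ), W s
        = ∫ s in Ioi (0:ℝ), (Real.sqrt (2 * Real.pi))⁻¹ * (s ^ 2 * Real.exp (-(1/2) * s ^ 2)) := by
      refine setIntegral_congr_fun measurableSet_Ioi (fun s hs => ?_)
      simp only [hWdef]
      rw [max_eq_left (le_of_lt hs), gauss_pdf01_eq]
      ring
    rw [hcongr, integral_const_mul, integral_Ioi_sq_exp_half]
    field_simp
  -- the comparison function
  have hH : Integrable (fun t : ℝ => Real.exp (-τ ^ 2 / 2) * W (t - τ)) :=
    (hIntW.comp_sub_right τ).const_mul _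
  have hHW : ∀ t : ℝ, Real.exp (-τ ^ 2 / 2) * W (t - τ)
      = Real.exp (-τ ^ 2 / 2) * (max (t - τ) 0 ^ 2 * gaussianPDFReal τ 1 t) := by
    intro t
    simp only [hWdef]
    rw [show gaussianPDFReal 0 1 (t - τ) = gaussianPDFReal τ 1 t by
      rw [gaussianPDFReal_sub]; norm_num]
  -- main chain
  rw [integral_gaussianReal_zero_one]
  have heven : ∀ x : ℝ, gaussianPDFReal 0 1 x * max (|x| - τ) 0 ^ 2 = G |x| := by
    intro x
    simp only [hGdef]
    rw [show gaussianPDFReal 0 1 |x| = gaussianPDFReal 0 1 x by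
      rw [gauss_pdf01_eq, gauss_pdf01_eq, sq_abs]]
  calc ∫ x, gaussianPDFReal 0 1 x * max (|x| - τ) 0 ^ 2
      = ∫ x, G |x| := by simp_rw [heven]
    _ = 2 * ∫ t in Ioi (0:ℝ), G t := integral_comp_abs
    _ ≤ 2 * ∫ t in Ioi (0:ℝ), Real.exp (-τ ^ 2 / 2) * W (t - τ) := by
        refine mul_le_mul_of_nonneg_left ?_ (by norm_num)
        refine integral_mono_of_nonneg (ae_of_all _ fun t => ?_) hH.integrableOn
          (ae_of_all _ fun t => ?_)
        · simp only [Pi.zero_apply, hGdef]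
          exact mul_nonneg (gaussianPDFReal_nonneg 0 1 t) (by positivity)
        · show G t ≤ Real.exp (-τ ^ 2 / 2) * W (t - τ)
          rw [hHW t]
          simp only [hGdef]
          exact gauss_soft_key τ hτ t
    _ ≤ 2 * ∫ t, Real.exp (-τ ^ 2 / 2) * W (t - τ) := by
        refine mul_le_mul_of_nonneg_left ?_ (by norm_num)
        refine setIntegral_le_integral hH (ae_of_all _ fun t => ?_)
        show (0:ℝ) ≤ Real.exp (-τ ^ 2 / 2) * W (t - τ)
        rw [hHW t]
        exact mul_nonneg (Real.exp_pos _).le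
          (mul_nonneg (by positivity) (gaussianPDFReal_nonneg τ 1 t))
    _ = Real.exp (-τ ^ 2 / 2) := by
        rw [integral_const_mul, integral_sub_right_eq_self W τ, hWval]
        ring
end
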